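/- Let q be an odd prime power, F a finite field with q² elements, and a ∈ F with a ≠ 0. Let s, t ∈ F with s^q = s, t^q = t, s ≠ 0, t ≠ 0, s² ≠ t² and s² + t² ≠ 0. Let h ∈ F be such that (h²)^q = h², h² is a nonsquare in 𝔽_q, and h² ≠ −1. Set c = (s² + t²)/(2·(s + t)) and k = c·(1 + 1/h), and let x ∈ F satisfy 2·a·(x·k)² = −(1 + 1/h²)·(s·t/(s + t)) + (1/h)·((s² + t²)/(s + t)). Then (x, k, h, s, t) is an admissible tuple and all seven associated configuration points P, Q, O, X, Y, M, N lie in the conic unital U_{a,0}. -/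

import Mathlib

/-- A point `(x, y) ∈ F × F` lies on the (affine) Buekenhout–Metz unital `U_{a,b}`. -/
def memBM (q : ℕ) {F : Type*} [Field F] (a b : F) (P : F × F) : Prop :=
  a * P.1 ^ 2 - a ^ q * P.1 ^ (2 * q) + (b - b ^ q) * P.1 ^ (q + 1) = P.2 - P.2 ^ q

/-- The tuple `(x, k, h, s, t)` is admissible. -/
def Admissible (q : ℕ) {F : Type*} [Field F] (x k h s t : F) : Prop :=
  x ≠ 0 ∧ k ≠ 0 ∧ h ≠ 0 ∧ h ≠ 1 ∧ s ^ q = s ∧ t ^ q = t ∧ s ≠ 0 ∧ t ≠ 0 ∧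
    s ≠ t ∧ s - t * h ≠ 0 ∧ t - s * h ≠ 0

def Wc {F : Type*} [Field F] (h s t : F) : F := h * (s - t) / (s - t * h)
def Uc {F : Type*} [Field F] (h s t : F) : F := s * t * (1 - h) / (s - t * h)
def Vc {F : Type*} [Field F] (h s t : F) : F := h * (t - s) / (t - s * h)
def Zc {F : Type*} [Field F] (h s t : F) : F := s * t * (1 - h) / (t - s * h)

/-- Configuration point `P = (x·k·h, k·h)`. -/
def ptP {F : Type*} [Field F] (x k h : F) : F × F := (x * k * h, k * h)
/-- Configuration point `Q = (x·k, k)`. -/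
def ptQ {F : Type*} [Field F] (x k : F) : F × F := (x * k, k)
/-- Configuration point `M = (k·x·W, k·W + U₀)`. -/
def ptM {F : Type*} [Field F] (x k h s t : F) : F × F :=
  (k * x * Wc h s t, k * Wc h s t + Uc h s t)
/-- Configuration point `N = (k·x·V, k·V + Z)`. -/
def ptN {F : Type*} [Field F] (x k h s t : F) : F × F :=
  (k * x * Vc h s t, k * Vc h s t + Zc h s t)

theorem stmt_6 (q : ℕ) (hq_odd : Odd q) (hq_pp : IsPrimePow q)
    (F : Type*) [Field F] [Fintype F] (hF : Fintype.card F = q ^ 2)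
    (a : F) (ha : a ≠ 0)
    (s t : F) (hs : s ^ q = s) (ht : t ^ q = t) (hs0 : s ≠ 0) (ht0 : t ≠ 0)
    (hst : s ^ 2 ≠ t ^ 2) (hst' : s ^ 2 + t ^ 2 ≠ 0)
    (h : F) (hh1 : (h ^ 2) ^ q = h ^ 2)
    (hh2 : ¬ ∃ w : F, w ^ q = w ∧ h ^ 2 = w ^ 2)  -- h² is a nonsquare in 𝔽_q
    (hh3 : h ^ 2 ≠ -1)
    (c k x : F)
    (hc : c = (s ^ 2 + t ^ 2) / (2 * (s + t)))
    (hk : k = c * (1 + 1 / h))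
    (hx : 2 * a * (x * k) ^ 2 =
      -(1 + 1 / h ^ 2) * (s * t / (s + t)) + (1 / h) * ((s ^ 2 + t ^ 2) / (s + t))) :
    Admissible q x k h s t ∧
      memBM q a 0 (ptP x k h) ∧ memBM q a 0 (ptQ x k) ∧
      memBM q a 0 ((0 : F), (0 : F)) ∧ memBM q a 0 ((0 : F), s) ∧ memBM q a 0 ((0 : F), t) ∧
      memBM q a 0 (ptM x k h s t) ∧ memBM q a 0 (ptN x k h s t) := by
  obtain ⟨p, n, hpp, hn, rfl⟩ := hq_pp
  have hp : p.Prime := hpp.nat_prime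
  haveI : Fact p.Prime := ⟨hp⟩
  have hq0 : p ^ n ≠ 0 := pow_ne_zero _ hp.pos.ne'
  have hcharp : CharP F p := by
    haveI := ringChar.charP F
    obtain ⟨m, hr, hcard⟩ := FiniteField.card F (ringChar F)
    have h1 : ringChar F ^ (m : ℕ) = p ^ (2 * n) := by rw [← hcard, hF]; ring
    have hdvd : p ∣ ringChar F ^ (m : ℕ) := by
      rw [h1]; exact dvd_pow_self p (by omega)
    have hpr : p = ringChar F :=
      (Nat.prime_dvd_prime_iff_eq hp hr).mp (hp.dvd_of_dvd_pow hdvd)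
    rw [hpr]; exact ringChar.charP F
  haveI := hcharp
  -- the Frobenius x ↦ x ^ (p ^ n)
  set φ : F →+* F := iterateFrobenius F p n with hφdef
  have hφ : ∀ z : F, φ z = z ^ p ^ n := fun z => iterateFrobenius_def p n z
  have hφs : φ s = s := by rw [hφ]; exact hs
  have hφt : φ t = t := by rw [hφ]; exact ht
  -- odd characteristic
  have hp_odd : Odd p := by
    rcases hp.eq_two_or_odd' with rfl | ho
    · exfalso
      obtain ⟨j, hj⟩ := dvd_pow_self 2 (show n ≠ 0 by omega)
      have := Nat.odd_iff.mp hq_odd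
      omega
    · exact ho
  have h2ne : (2 : F) ≠ 0 := by
    intro h2
    have hd : (p : ℕ) ∣ 2 := (CharP.cast_eq_zero_iff F p 2).mp (by exact_mod_cast h2)
    rcases (Nat.dvd_prime Nat.prime_two).mp hd with h1 | h1
    · exact hp.one_lt.ne' h1
    · rw [h1] at hp_odd; exact (by decide : ¬ Odd 2) hp_odd
  -- h is not fixed by Frobenius
  have hnot : ∀ w : F, w ^ p ^ n = w → h ≠ w := fun w hw e => hh2 ⟨w, hw, by rw [e]⟩
  have hh0 : h ≠ 0 := hnot 0 (zero_pow hq0)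
  have hhone : h ≠ 1 := hnot 1 (one_pow _)
  have hhm1 : h ≠ -1 := hnot (-1) (by rw [hq_odd.neg_pow, one_pow])
  have hφh : φ h = -h := by
    have e2 : φ (h ^ 2) = h ^ 2 := by rw [hφ]; exact hh1
    rw [map_pow] at e2
    have e : (φ h - h) * (φ h + h) = 0 := by linear_combination e2
    rcases mul_eq_zero.mp e with e | e
    · exact absurd rfl (hnot h (by rw [← hφ]; exact sub_eq_zero.mp e))
    · exact eq_neg_of_add_eq_zero_left e
  -- basic nonvanishing
  have hσ : s + t ≠ 0 := by
    intro e
    exact hst (by rw [show s = -t from by linear_combination e]; ring)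
  have hstne : s ≠ t := fun e => hst (by rw [e])
  have hD1 : s - t * h ≠ 0 := by
    intro e
    exact hnot (s / t) (by rw [div_pow, hs, ht]) (by rw [eq_div_iff ht0]; linear_combination -e)
  have hD2 : t - s * h ≠ 0 := by
    intro e
    exact hnot (t / s) (by rw [div_pow, hs, ht]) (by rw [eq_div_iff hs0]; linear_combination -e)
  have hE1 : s + t * h ≠ 0 := by
    intro e
    exact hnot (-s / t) (by rw [div_pow, hq_odd.neg_pow, hs, ht])
      (by rw [eq_div_iff ht0]; linear_combination e)
  have hE2 : t + s * h ≠ 0 := by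
    intro e
    exact hnot (-t / s) (by rw [div_pow, hq_odd.neg_pow, hs, ht])
      (by rw [eq_div_iff hs0]; linear_combination e)
  have hE1' : s - t * -h ≠ 0 := by rw [mul_neg, sub_neg_eq_add]; exact hE1
  have hE2' : t - s * -h ≠ 0 := by rw [mul_neg, sub_neg_eq_add]; exact hE2
  -- cleared-denominator versions of the constraints
  have hxp : 2 * a * (x * k) ^ 2 * (h ^ 2 * (s + t))
      = -(h ^ 2 + 1) * (s * t) + h * (s ^ 2 + t ^ 2) := by
    rw [hx]; field_simp
  have hkp : k * (2 * h * (s + t)) = (s ^ 2 + t ^ 2) * (h + 1) := by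
    rw [hk, hc]; field_simp
  -- nonvanishing of x and k
  have hx0 : x ≠ 0 := by
    intro e
    rw [e] at hxp
    have e0 : (s - t * h) * (t - s * h) = 0 := by linear_combination hxp
    rcases mul_eq_zero.mp e0 with e0 | e0
    exacts [hD1 e0, hD2 e0]
  have hk0 : k ≠ 0 := by
    intro e
    rw [e] at hkp
    have e0 : (s ^ 2 + t ^ 2) * (h + 1) = 0 := by linear_combination -hkp
    rcases mul_eq_zero.mp e0 with e0 | e0
    · exact hst' e0
    · exact hhm1 (by linear_combination e0)
  -- membership criterion
  have mem_of : ∀ X Y : F, φ (a * X ^ 2 - Y) = a * X ^ 2 - Y → memBM (p ^ n) a 0 (X, Y) := by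
    intro X Y hf
    rw [hφ] at hf
    rw [sub_pow_char_pow, mul_pow, ← pow_mul] at hf
    show a * X ^ 2 - a ^ p ^ n * X ^ (2 * p ^ n) + ((0 : F) - 0 ^ p ^ n) * X ^ (p ^ n + 1)
        = Y - Y ^ p ^ n
    rw [zero_pow hq0]
    linear_combination -hf
  -- denominators
  have dQ : 2 * h ^ 2 * (s + t) ≠ 0 := mul_ne_zero (mul_ne_zero h2ne (pow_ne_zero 2 hh0)) hσ
  have dQ' : 2 * (-h) ^ 2 * (s + t) ≠ 0 :=
    mul_ne_zero (mul_ne_zero h2ne (pow_ne_zero 2 (neg_ne_zero.mpr hh0))) hσ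
  have dP : 2 * (s + t) ≠ 0 := mul_ne_zero h2ne hσ
  have dM : 2 * (s + t) * (s - t * h) ^ 2 ≠ 0 := mul_ne_zero dP (pow_ne_zero 2 hD1)
  have dM' : 2 * (s + t) * (s - t * -h) ^ 2 ≠ 0 := mul_ne_zero dP (pow_ne_zero 2 hE1')
  have dN : 2 * (s + t) * (t - s * h) ^ 2 ≠ 0 := mul_ne_zero dP (pow_ne_zero 2 hD2)
  have dN' : 2 * (s + t) * (t - s * -h) ^ 2 ≠ 0 := mul_ne_zero dP (pow_ne_zero 2 hE2')
  -- base equalities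
  have eQ : a * (x * k) ^ 2 - k
      = (-(h ^ 2 + 1) * (s * t) - h ^ 2 * (s ^ 2 + t ^ 2)) / (2 * h ^ 2 * (s + t)) := by
    rw [eq_div_iff dQ]
    linear_combination hxp - h * hkp
  have eP : a * (x * k * h) ^ 2 - k * h
      = (-(h ^ 2 + 1) * (s * t) - (s ^ 2 + t ^ 2)) / (2 * (s + t)) := by
    rw [eq_div_iff dP]
    linear_combination hxp - hkp
  have eM0 : a * (k * x * (h * (s - t) / (s - t * h))) ^ 2
        - (k * (h * (s - t) / (s - t * h)) + s * t * (1 - h) / (s - t * h))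
      = (a * (k * x * (h * (s - t))) ^ 2
          - (k * (h * (s - t)) * (s - t * h) + s * t * (1 - h) * (s - t * h)))
        / ((s - t * h) ^ 2) := by
    rw [eq_div_iff (pow_ne_zero 2 hD1)]
    generalize s - t * h = D at hD1 ⊢
    field_simp
  have eM : a * (k * x * (h * (s - t) / (s - t * h))) ^ 2
        - (k * (h * (s - t) / (s - t * h)) + s * t * (1 - h) / (s - t * h))
      = ((-(h ^ 2 + 1) * (s * t) + h * (s ^ 2 + t ^ 2)) * (s - t) ^ 2
          - (s ^ 2 + t ^ 2) * (h + 1) * (s - t) * (s - t * h)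
          - 2 * (s + t) * (s * t) * (1 - h) * (s - t * h))
        / (2 * (s + t) * (s - t * h) ^ 2) := by
    rw [eM0, div_eq_div_iff (pow_ne_zero 2 hD1) dM]
    linear_combination ((s - t) ^ 2 * (s - t * h) ^ 2) * hxp
      - ((s - t) * (s - t * h) ^ 3) * hkp
  have eN0 : a * (k * x * (h * (t - s) / (t - s * h))) ^ 2
        - (k * (h * (t - s) / (t - s * h)) + s * t * (1 - h) / (t - s * h))
      = (a * (k * x * (h * (t - s))) ^ 2
          - (k * (h * (t - s)) * (t - s * h) + s * t * (1 - h) * (t - s * h)))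
        / ((t - s * h) ^ 2) := by
    rw [eq_div_iff (pow_ne_zero 2 hD2)]
    generalize t - s * h = D at hD2 ⊢
    field_simp
  have eN : a * (k * x * (h * (t - s) / (t - s * h))) ^ 2
        - (k * (h * (t - s) / (t - s * h)) + s * t * (1 - h) / (t - s * h))
      = ((-(h ^ 2 + 1) * (s * t) + h * (s ^ 2 + t ^ 2)) * (t - s) ^ 2
          - (s ^ 2 + t ^ 2) * (h + 1) * (t - s) * (t - s * h)
          - 2 * (s + t) * (s * t) * (1 - h) * (t - s * h))
        / (2 * (s + t) * (t - s * h) ^ 2) := by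
    rw [eN0, div_eq_div_iff (pow_ne_zero 2 hD2) dN]
    linear_combination ((t - s) ^ 2 * (t - s * h) ^ 2) * hxp
      - ((t - s) * (t - s * h) ^ 3) * hkp
  refine ⟨⟨hx0, hk0, hh0, hhone, hs, ht, hs0, ht0, hstne, hD1, hD2⟩, ?_, ?_, ?_, ?_, ?_, ?_, ?_⟩
  · -- P
    unfold ptP
    apply mem_of
    rw [eP]
    simp only [map_div₀, map_sub, map_add, map_mul, map_pow, map_neg, map_one, map_ofNat,
      hφs, hφt, hφh]
    rw [div_eq_div_iff dP dP]
    ring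
  · -- Q
    unfold ptQ
    apply mem_of
    rw [eQ]
    simp only [map_div₀, map_sub, map_add, map_mul, map_pow, map_neg, map_one, map_ofNat,
      hφs, hφt, hφh]
    rw [div_eq_div_iff dQ' dQ]
    ring
  · -- O
    apply mem_of
    rw [show a * (0 : F) ^ 2 - 0 = 0 by ring, map_zero]
  · -- X
    apply mem_of
    rw [show a * (0 : F) ^ 2 - s = -s by ring, map_neg, hφs]
  · -- Y
    apply mem_of
    rw [show a * (0 : F) ^ 2 - t = -t by ring, map_neg, hφt]
  · -- M
    unfold ptM Wc Uc
    apply mem_of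
    rw [eM]
    simp only [map_div₀, map_sub, map_add, map_mul, map_pow, map_neg, map_one, map_ofNat,
      hφs, hφt, hφh]
    rw [div_eq_div_iff dM' dM]
    ring
  · -- N
    unfold ptN Vc Zc
    apply mem_of
    rw [eN]
    simp only [map_div₀, map_sub, map_add, map_mul, map_pow, map_neg, map_one, map_ofNat,
      hφs, hφt, hφh]
    rw [div_eq_div_iff dN' dN]
    ring
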